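/- Let $x_1,\ldots,x_d>0$ and $c_1,\ldots,c_d\ge 1$ be real numbers such that $1-\prod_{i=1}^d x_i < \sum_{i=1}^d c_i x_i < 1$. Then there exists $z\in\mathbb{N}^d\setminus\{0\}$ such that $\frac{z_j}{1+\sum_{i=1}^d c_i z_i} < x_j$ for every $j$. -/

import Mathlib

open MeasureTheory Submodule Finset

theorem stmt_11 (d : ℕ) (hd : 1 ≤ d) (x c : Fin d → ℝ)
    (hx : ∀ i, 0 < x i) (hc : ∀ i, 1 ≤ c i)
    (h1 : 1 - ∏ i, x i < ∑ i, c i * x i) (h2 : ∑ i, c i * x i < 1) :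
    ∃ z : Fin d → ℕ, z ≠ 0 ∧
      ∀ j, (z j : ℝ) / (1 + ∑ i, c i * z i) < x j := by
  classical
  have hS1 : 0 < 1 - ∑ i, c i * x i := by linarith
  have hxprod : 0 < ∏ i, x i := Finset.prod_pos fun i _ => hx i
  -- the matrix
  set M : Matrix (Fin d) (Fin d) ℝ :=
    Matrix.of fun j i => (if j = i then (x j)⁻¹ else 0) - c i with hMdef
  have hfact : M = Matrix.diagonal (fun j => (x j)⁻¹) *
      (1 - Matrix.replicateCol Unit x * Matrix.replicateRow Unit c) := by
    rw [Matrix.mul_sub, Matrix.mul_one, ← Matrix.mul_assoc]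
    ext j i
    simp [hMdef, Matrix.mul_apply, Matrix.diagonal_apply, Matrix.sub_apply,
      Finset.sum_ite_eq, inv_mul_cancel₀ (hx j).ne']
  have hdet : M.det = (∏ i, (x i)⁻¹) * (1 - ∑ i, c i * x i) := by
    rw [hfact, Matrix.det_mul, Matrix.det_diagonal]
    congr 1
    have h : (1 : Matrix (Fin d) (Fin d) ℝ) - Matrix.replicateCol Unit x * Matrix.replicateRow Unit c
        = 1 + Matrix.replicateCol Unit (-x) * Matrix.replicateRow Unit c := by
      ext j i
      simp [Matrix.mul_apply, sub_eq_add_neg]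
    rw [h, Matrix.det_one_add_replicateCol_mul_replicateRow]
    simp [dotProduct, mul_neg, Finset.sum_neg_distrib, sub_eq_add_neg]
  have hdetpos : 0 < M.det := by
    rw [hdet]
    exact mul_pos (Finset.prod_pos fun i _ => inv_pos.mpr (hx i)) hS1
  -- the convex body
  set C : Set (Fin d → ℝ) := Set.pi Set.univ fun _ => Set.Ioo (-1 : ℝ) 1 with hCdef
  set s : Set (Fin d → ℝ) := Matrix.toLin' M ⁻¹' C with hsdef
  have hdetlin : LinearMap.det (Matrix.toLin' M) = M.det := LinearMap.det_toLin' M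
  -- volume computations
  have hvolC : volume C = ENNReal.ofReal 2 ^ d := by
    rw [hCdef, volume_pi_pi]
    simp [Real.volume_Ioo]
    norm_num
  have hvols : volume s = ENNReal.ofReal (M.det⁻¹) * ENNReal.ofReal 2 ^ d := by
    rw [hsdef, Measure.addHaar_preimage_linearMap volume (by rw [hdetlin]; exact hdetpos.ne'), hdetlin,
      hvolC, abs_of_pos (inv_pos.mpr hdetpos)]
  -- the lattice
  set L := (span ℤ (Set.range (Pi.basisFun ℝ (Fin d)))).toAddSubgroup with hLdef
  have h_fund := ZSpan.isAddFundamentalDomain' (Pi.basisFun ℝ (Fin d)) volume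
  have : Countable L := by
    change Countable (span ℤ (Set.range (Pi.basisFun ℝ (Fin d))))
    infer_instance
  have hvolF : volume (ZSpan.fundamentalDomain (Pi.basisFun ℝ (Fin d))) = 1 := by
    rw [ZSpan.fundamentalDomain_pi_basisFun, volume_pi_pi]
    simp [Real.volume_Ico]
  -- symmetry and convexity of s
  have h_symm : ∀ y ∈ s, -y ∈ s := by
    intro y hy
    simp only [hsdef, Set.mem_preimage, map_neg] at hy ⊢
    intro j _
    have := hy j (Set.mem_univ j)
    simp only [Set.mem_Ioo, Pi.neg_apply] at this ⊢
    constructor <;> linarith [this.1, this.2]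
  have h_conv : Convex ℝ s :=
    (convex_pi fun _ _ => convex_Ioo _ _).linear_preimage _
  -- measure inequality
  have h_meas : volume (ZSpan.fundamentalDomain (Pi.basisFun ℝ (Fin d))) *
      2 ^ Module.finrank ℝ (Fin d → ℝ) < volume s := by
    rw [hvolF, one_mul, hvols, Module.finrank_fin_fun]
    have h2' : (2 : ENNReal) ^ d = ENNReal.ofReal 2 ^ d := by
      norm_num
    rw [h2']
    have hlt : (1 : ENNReal) < ENNReal.ofReal (M.det⁻¹) := by
      rw [← ENNReal.ofReal_one]
      refine (ENNReal.ofReal_lt_ofReal_iff (by positivity)).mpr ?_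
      rw [lt_inv_comm₀ one_pos hdetpos, inv_one, hdet]
      calc (∏ i, (x i)⁻¹) * (1 - ∑ i, c i * x i)
          < (∏ i, (x i)⁻¹) * (∏ i, x i) := by
            apply mul_lt_mul_of_pos_left (by linarith)
              (Finset.prod_pos fun i _ => inv_pos.mpr (hx i))
        _ = 1 := by
            rw [← Finset.prod_mul_distrib]
            exact Finset.prod_eq_one fun i _ => inv_mul_cancel₀ (hx i).ne'
    calc ENNReal.ofReal 2 ^ d = 1 * ENNReal.ofReal 2 ^ d := (one_mul _).symm
      _ < ENNReal.ofReal (M.det⁻¹) * ENNReal.ofReal 2 ^ d := by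
          apply ENNReal.mul_lt_mul_iff_left ?_ ?_ |>.mpr hlt
          · positivity
          · exact ENNReal.pow_ne_top ENNReal.ofReal_ne_top
  -- apply Minkowski
  obtain ⟨⟨v, hvL⟩, h_nz, h_mem⟩ :=
    exists_ne_zero_mem_lattice_of_measure_mul_two_pow_lt_measure (L := L)
      h_fund h_symm h_conv h_meas
  have hvne : v ≠ 0 := by
    simpa [Subtype.ext_iff] using h_nz
  -- extract integer coordinates
  have hint : ∀ i, ∃ m : ℤ, (m : ℝ) = v i := by
    intro i
    rw [hLdef, Submodule.mem_toAddSubgroup] at hvL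
    obtain ⟨m, hm⟩ := ((Pi.basisFun ℝ (Fin d)).mem_span_iff_repr_mem ℤ v).mp hvL i
    exact ⟨m, by simpa using hm⟩
  choose w hw using hint
  have hwne : w ≠ 0 := by
    intro h
    apply hvne
    funext i
    rw [← hw i, h]
    simp
  -- the inequalities satisfied by v
  have hineq : ∀ j, -1 < (w j : ℝ) * (x j)⁻¹ - ∑ i, c i * w i ∧
      (w j : ℝ) * (x j)⁻¹ - ∑ i, c i * w i < 1 := by
    intro j
    have := h_mem j (Set.mem_univ j)
    simp only [Set.mem_Ioo] at this
    have hMv : Matrix.toLin' M v j = (w j : ℝ) * (x j)⁻¹ - ∑ i, c i * w i := by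
      rw [Matrix.toLin'_apply]
      simp only [Matrix.mulVec, dotProduct, hMdef, Matrix.of_apply, sub_mul]
      rw [Finset.sum_sub_distrib]
      congr 1
      · rw [Finset.sum_eq_single j]
        · simp [hw j, mul_comm]
        · intro i _ hij
          simp [Ne.symm hij]
        · simp
      · exact Finset.sum_congr rfl fun i _ => by rw [hw i]
    rw [hMv] at this
    exact this
  -- WLOG some coordinate of w is positive
  have key : ∃ u : Fin d → ℤ, (∃ j, 0 < u j) ∧
      ∀ j, (u j : ℝ) * (x j)⁻¹ - ∑ i, c i * u i < 1 := by
    by_cases hpos : ∃ j, 0 < w j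
    · exact ⟨w, hpos, fun j => (hineq j).2⟩
    · push_neg at hpos
      refine ⟨-w, ?_, ?_⟩
      · obtain ⟨j, hj⟩ : ∃ j, w j ≠ 0 := by
          by_contra h
          push_neg at h
          exact hwne (funext h)
        exact ⟨j, by have := hpos j; simp; omega⟩
      · intro j
        have := (hineq j).1
        simp only [Pi.neg_apply]
        push_cast
        have hsum : ∑ i, c i * (-(w i) : ℝ) = -∑ i, c i * (w i : ℝ) := by
          rw [← Finset.sum_neg_distrib]
          exact Finset.sum_congr rfl fun i _ => by ring
        calc (-(w j) : ℝ) * (x j)⁻¹ - ∑ i, c i * (-(w i) : ℝ)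
            = -((w j : ℝ) * (x j)⁻¹ - ∑ i, c i * (w i : ℝ)) := by rw [hsum]; ring
          _ < 1 := by linarith
  obtain ⟨u, ⟨j₀, hj₀⟩, hu⟩ := key
  refine ⟨fun j => (u j).toNat, ?_, ?_⟩
  · intro h
    have := congrFun h j₀
    simp only [Pi.zero_apply] at this
    omega
  · intro j
    set z : Fin d → ℕ := fun j => (u j).toNat with hzdef
    have hzcast : ∀ i, (z i : ℝ) = max (u i : ℝ) 0 := by
      intro i
      simp only [hzdef]
      rcases le_or_gt 0 (u i) with h | h
      · rw [max_eq_left (by exact_mod_cast h)]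
        exact_mod_cast Int.toNat_of_nonneg h
      · rw [max_eq_right (by exact_mod_cast h.le), Int.toNat_of_nonpos h.le]
        simp
    have hzsum : ∑ i, c i * (u i : ℝ) ≤ ∑ i, c i * (z i : ℝ) := by
      apply Finset.sum_le_sum
      intro i _
      apply mul_le_mul_of_nonneg_left _ (by linarith [hc i])
      rw [hzcast i]; exact le_max_left _ _
    have hzsum0 : 0 ≤ ∑ i, c i * (z i : ℝ) := by
      apply Finset.sum_nonneg
      intro i _
      exact mul_nonneg (by linarith [hc i]) (Nat.cast_nonneg _)
    have hden : 0 < 1 + ∑ i, c i * (z i : ℝ) := by linarith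
    rw [div_lt_iff₀ hden]
    rcases le_or_gt 0 (u j) with h | h
    · have h1' : (u j : ℝ) * (x j)⁻¹ < 1 + ∑ i, c i * u i := by linarith [hu j]
      have : (z j : ℝ) = (u j : ℝ) := by
        rw [hzcast j, max_eq_left (by exact_mod_cast h)]
      rw [this]
      calc (u j : ℝ) = (u j : ℝ) * (x j)⁻¹ * x j :=
            (inv_mul_cancel_right₀ (hx j).ne' _).symm
        _ < (1 + ∑ i, c i * u i) * x j := by
            apply mul_lt_mul_of_pos_right h1' (hx j)
        _ ≤ (1 + ∑ i, c i * z i) * x j := by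
            apply mul_le_mul_of_nonneg_right (by linarith) (hx j).le
        _ = x j * (1 + ∑ i, c i * z i) := mul_comm _ _
    · have : (z j : ℝ) = 0 := by
        rw [hzcast j, max_eq_right (by exact_mod_cast h.le)]
      rw [this]
      exact mul_pos (hx j) hden
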